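/- The set B_α satisfies (1 − ρ)·B_X ⊆ B_α ⊆ B_X; consequently its Minkowski functional ‖·‖_α is a norm on X equivalent to ‖·‖, and ‖x‖ ≤ ‖x‖_α ≤ (1 − ρ)⁻¹‖x‖ for all x ∈ X. -/
import Mathlib


open Filter Topology Set Pointwise

section Defs

variable {X : Type*} [AddCommGroup X] [Module ℝ X]

/-- `N` is a norm on the real vector space `X`. -/
def IsNorm (N : X → ℝ) : Prop :=
  (∀ x : X, N x = 0 ↔ x = 0) ∧
  (∀ (a : ℝ) (x : X), N (a • x) = |a| * N x) ∧
  (∀ x y : X, N (x + y) ≤ N x + N y)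

end Defs

theorem statement12 {X : Type*} [NormedAddCommGroup X] [NormedSpace ℝ X] [CompleteSpace X]
    (ρ t : ℝ) (hρ0 : 0 < ρ) (hρ1 : ρ < 1 / 4) (ht0 : 0 < t) (ht1 : t < ρ / 16)
    (v e h : X) (hv : ‖v‖ = 1) (he : ‖e‖ = 1) (hh : ‖h‖ = 1)
    (vs es hs : X →L[ℝ] ℝ) (hvs : ‖vs‖ = 1) (hes : ‖es‖ = 1) (hhs : ‖hs‖ = 1)
    (hvv : vs v = 1) (hee : es e = 1) (hhh : hs h = 1) (heh : |es h| < ρ / 800)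
    (xp xm yp ym : X)
    (hxp : xp = (1 - ρ / 2) • e + t • h) (hxm : xm = (1 - ρ / 2) • e - t • h)
    (hyp : yp = xp + (ρ / 4) • v) (hym : ym = xm - (ρ / 4) • v)
    (BX SA BA : Set X)
    (hBX : BX = Metric.closedBall (0 : X) 1)
    (hSA : SA = {x ∈ BX | 1 - ρ < es x})
    (hBA : BA = closure (convexHull ℝ ((BX \ (SA ∪ Neg.neg '' SA)) ∪ {yp, ym, -yp, -ym})))
    :
    (1 - ρ) • BX ⊆ BA ∧ BA ⊆ BX ∧
    IsNorm (gauge BA) ∧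
    ∀ x : X, ‖x‖ ≤ gauge BA x ∧ gauge BA x ≤ (1 - ρ)⁻¹ * ‖x‖ := by
  have hρ4 : (0:ℝ) < 1 - ρ := by linarith
  set G : Set X := (BX \ (SA ∪ Neg.neg '' SA)) ∪ {yp, ym, -yp, -ym} with hG
  have hBXconv : Convex ℝ BX := by rw [hBX]; exact convex_closedBall _ _
  have hBXclosed : IsClosed BX := by rw [hBX]; exact Metric.isClosed_closedBall
  have hmemBX : ∀ x : X, x ∈ BX ↔ ‖x‖ ≤ 1 := by
    intro x; rw [hBX, Metric.mem_closedBall, dist_zero_right]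
  have hnyp : ‖yp‖ ≤ 1 := by
    rw [hyp, hxp]
    calc ‖(1 - ρ / 2) • e + t • h + (ρ / 4) • v‖
        ≤ ‖(1 - ρ / 2) • e‖ + ‖t • h‖ + ‖(ρ / 4) • v‖ := norm_add₃_le
      _ = (1 - ρ / 2) + t + ρ / 4 := by
          rw [norm_smul, norm_smul, norm_smul, he, hh, hv, Real.norm_eq_abs,
            Real.norm_eq_abs, Real.norm_eq_abs, abs_of_pos (by linarith : (0:ℝ) < 1 - ρ / 2),
            abs_of_pos ht0, abs_of_pos (by linarith : (0:ℝ) < ρ / 4)]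
          ring
      _ ≤ 1 := by linarith
  have hnym : ‖ym‖ ≤ 1 := by
    rw [hym, hxm]
    calc ‖(1 - ρ / 2) • e - t • h - (ρ / 4) • v‖
        ≤ ‖(1 - ρ / 2) • e - t • h‖ + ‖(ρ / 4) • v‖ := norm_sub_le _ _
      _ ≤ ‖(1 - ρ / 2) • e‖ + ‖t • h‖ + ‖(ρ / 4) • v‖ := by
          have := norm_sub_le ((1 - ρ / 2) • e) (t • h); linarith
      _ = (1 - ρ / 2) + t + ρ / 4 := by
          rw [norm_smul, norm_smul, norm_smul, he, hh, hv, Real.norm_eq_abs,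
            Real.norm_eq_abs, Real.norm_eq_abs, abs_of_pos (by linarith : (0:ℝ) < 1 - ρ / 2),
            abs_of_pos ht0, abs_of_pos (by linarith : (0:ℝ) < ρ / 4)]
          ring
      _ ≤ 1 := by linarith
  have hGsub : G ⊆ BX := by
    rintro x (hx | hx)
    · exact hx.1
    · simp only [mem_insert_iff, mem_singleton_iff] at hx
      rcases hx with rfl | rfl | rfl | rfl <;> rw [hmemBX] <;> simp [hnyp, hnym]
  have hBAsubBX : BA ⊆ BX := by
    rw [hBA]
    exact closure_minimal (convexHull_min hGsub hBXconv) hBXclosed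
  have hesle : ∀ x : X, |es x| ≤ ‖x‖ := by
    intro x
    calc |es x| ≤ ‖es‖ * ‖x‖ := es.le_opNorm x
      _ = ‖x‖ := by rw [hes, one_mul]
  have hsub1 : (1 - ρ) • BX ⊆ BA := by
    rintro x ⟨y, hy, rfl⟩
    rw [hBA]
    apply subset_closure
    apply subset_convexHull
    left
    have hny : ‖y‖ ≤ 1 := (hmemBX y).1 hy
    have hnle : ‖(1 - ρ) • y‖ ≤ 1 - ρ := by
      rw [norm_smul, Real.norm_eq_abs, abs_of_pos hρ4]
      nlinarith
    refine ⟨(hmemBX _).2 (by linarith), ?_⟩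
    rintro (hx | ⟨s, hsmem, hsx⟩)
    · rw [hSA] at hx
      have h1 : es ((1 - ρ) • y) ≤ |es ((1 - ρ) • y)| := le_abs_self _
      have h2 := hesle ((1 - ρ) • y)
      have := hx.2
      linarith
    · rw [hSA] at hsmem
      have h1 : -es ((1 - ρ) • y) ≤ |es ((1 - ρ) • y)| := neg_le_abs _
      have h2 := hesle ((1 - ρ) • y)
      have h3' : -s = (1 - ρ) • y := hsx
      have h3 : es s = -es ((1 - ρ) • y) := by
        rw [← h3']; simp
      have := hsmem.2
      rw [h3] at this
      linarith
  have hGsymm : ∀ x ∈ G, -x ∈ G := by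
    rintro x (⟨hx1, hx2⟩ | hx)
    · left
      refine ⟨(hmemBX _).2 (by rw [norm_neg]; exact (hmemBX _).1 hx1), ?_⟩
      rintro (hnx | ⟨s, hsmem, hsx⟩)
      · exact hx2 (Or.inr ⟨-x, hnx, by simp⟩)
      · apply hx2
        left
        have : s = x := by rw [← neg_neg s]; rw [show -s = -x from hsx]; simp
        rwa [this] at hsmem
    · simp only [mem_insert_iff, mem_singleton_iff] at hx
      rcases hx with rfl | rfl | rfl | rfl
      · right; simp
      · right; simp
      · right; rw [neg_neg]; simp
      · right; rw [neg_neg]; simp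
  have hnegG : -G ⊆ G := by
    intro x hx
    rw [Set.mem_neg] at hx
    have := hGsymm _ hx
    rwa [neg_neg] at this
  have hBAsymm : ∀ x ∈ BA, -x ∈ BA := by
    intro x hx
    have h1 : -BA ⊆ BA := by
      rw [hBA, neg_closure, ← convexHull_neg]
      exact closure_mono (convexHull_mono hnegG)
    exact h1 (by rwa [Set.mem_neg, neg_neg])
  have hBAconv : Convex ℝ BA := by
    rw [hBA]; exact (convex_convexHull ℝ G).closure
  have hballsub : Metric.closedBall (0 : X) (1 - ρ) ⊆ BA := by
    intro x hx
    apply hsub1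
    rw [hBX, smul_closedBall _ _ zero_le_one, smul_zero, Real.norm_eq_abs,
      abs_of_pos hρ4, mul_one]
    exact hx
  have habs : Absorbent ℝ BA := by
    refine (absorbent_ball_zero hρ4).mono ?_
    exact Metric.ball_subset_closedBall.trans hballsub
  have hgaugeBX : ∀ x : X, gauge BX x = ‖x‖ := by
    intro x; rw [hBX, gauge_closedBall zero_le_one, div_one]
  have hLB : ∀ x : X, ‖x‖ ≤ gauge BA x := by
    intro x
    have := gauge_mono habs hBAsubBX x
    rwa [hgaugeBX] at this
  have habs2 : Absorbent ℝ ((1 - ρ) • BX) := by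
    refine (absorbent_ball_zero hρ4).mono ?_
    refine Metric.ball_subset_closedBall.trans ?_
    rw [hBX, smul_closedBall _ _ zero_le_one, smul_zero, Real.norm_eq_abs,
      abs_of_pos hρ4, mul_one]
  have hUB : ∀ x : X, gauge BA x ≤ (1 - ρ)⁻¹ * ‖x‖ := by
    intro x
    have h1 := gauge_mono habs2 hsub1 x
    rw [hBX, smul_closedBall _ _ zero_le_one, smul_zero, Real.norm_eq_abs,
      abs_of_pos hρ4, mul_one, gauge_closedBall hρ4.le, div_eq_inv_mul] at h1
    exact h1
  refine ⟨hsub1, hBAsubBX, ⟨?_, ?_, ?_⟩, fun x => ⟨hLB x, hUB x⟩⟩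
  · intro x
    constructor
    · intro hx
      have h1 := hLB x
      rw [hx] at h1
      exact norm_le_zero_iff.mp h1
    · rintro rfl; exact gauge_zero
  · intro a x
    rcases le_or_gt 0 a with ha | ha
    · rw [gauge_smul_of_nonneg ha, smul_eq_mul, abs_of_nonneg ha]
    · have : a • x = -((-a) • x) := by rw [neg_smul, neg_neg]
      rw [this, gauge_neg hBAsymm, gauge_smul_of_nonneg (by linarith : (0:ℝ) ≤ -a),
        smul_eq_mul, abs_of_neg ha]
  · exact gauge_add_le hBAconv habs
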